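/- For every integer k ≥ 2, as N → ∞, ∑_{k-free n with 1 ≤ n ≤ N} 1/( n_{(k−1)-free} · φ(n_{(k−1)-power}) ) ∼ log N, i.e. the ratio of the two sides tends to 1. -/

import Mathlib

open Filter
open scoped Classical

/-- `n` is `k`-free: no `k`-th power of a prime divides `n`. -/
def KFree (k n : ℕ) : Prop := ∀ p : ℕ, p.Prime → ¬ p ^ k ∣ n

/-- The `m`-free part of `n`: each prime `p` appearing with exponent `e` in `n` contributes
`p ^ (e % m)`.  In particular the `1`-free part of any `n` is `1`. -/
def freePart (m n : ℕ) : ℕ := n.factorization.prod fun p e => p ^ (e % m)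

/-- The `m`-power part of `n`: each prime `p` appearing with exponent `e` in `n` contributes
`p ^ (m * (e / m))`, so the result is a perfect `m`-th power, and
`n = freePart m n * powerPart m n`.  In particular the `1`-power part of `n` is `n` itself. -/
def powerPart (m n : ℕ) : ℕ := n.factorization.prod fun p e => p ^ (m * (e / m))

namespace KfreeAux

variable {K n t m : ℕ}





/-- primes dividing `n` with exponent exactly `K` -/
noncomputable def QSet (K n : ℕ) : Finset ℕ := {p ∈ n.primeFactors | n.factorization p = K}

noncomputable def cNum (K n : ℕ) : ℕ := ∏ p ∈ QSet K n, p

def cap (K m : ℕ) : ℕ := m.factorization.prod fun p e => p ^ min e K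

lemma prod_pow_ne_zero (s : Finset ℕ) (hs : ∀ p ∈ s, p.Prime) (E : ℕ → ℕ) :
    (∏ p ∈ s, p ^ E p) ≠ 0 :=
  Finset.prod_ne_zero_iff.mpr fun p hp => pow_ne_zero _ (hs p hp).ne_zero

lemma factorization_prod_pow (s : Finset ℕ) (hs : ∀ p ∈ s, p.Prime) (E : ℕ → ℕ) (q : ℕ) :
    (∏ p ∈ s, p ^ E p).factorization q = if q ∈ s then E q else 0 := by
  rw [Nat.factorization_prod (fun p hp => pow_ne_zero _ (hs p hp).ne_zero)]
  rw [Finset.sum_apply']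
  rw [Finset.sum_congr rfl (fun p hp => by
    rw [(hs p hp).factorization_pow, Finsupp.single_apply])]
  exact Finset.sum_ite_eq' s q E

lemma prodPow_eq (n : ℕ) (F : ℕ → ℕ) :
    (n.factorization.prod fun p e => p ^ F e)
      = ∏ p ∈ n.primeFactors, p ^ F (n.factorization p) := by
  rw [Finsupp.prod, Nat.support_factorization]

lemma prodPow_ne_zero (n : ℕ) (F : ℕ → ℕ) :
    (n.factorization.prod fun p e => p ^ F e) ≠ 0 := by
  rw [prodPow_eq]
  exact prod_pow_ne_zero _ (fun p hp => Nat.prime_of_mem_primeFactors hp) _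

lemma factorization_prodPow (n : ℕ) (F : ℕ → ℕ) (hF : F 0 = 0) (q : ℕ) :
    (n.factorization.prod fun p e => p ^ F e).factorization q = F (n.factorization q) := by
  rw [prodPow_eq, factorization_prod_pow _ (fun p hp => Nat.prime_of_mem_primeFactors hp)]
  split_ifs with h
  · rfl
  · rw [← Nat.support_factorization] at h
    rw [Finsupp.notMem_support_iff.mp h, hF]

lemma freePart_ne_zero (m n : ℕ) : freePart m n ≠ 0 := prodPow_ne_zero n _
lemma powerPart_ne_zero (m n : ℕ) : powerPart m n ≠ 0 := prodPow_ne_zero n _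
lemma cap_ne_zero (K m : ℕ) : cap K m ≠ 0 := prodPow_ne_zero m _

lemma factorization_freePart (m n q : ℕ) :
    (freePart m n).factorization q = n.factorization q % m :=
  factorization_prodPow n _ (Nat.zero_mod m) q

lemma factorization_powerPart (m n q : ℕ) :
    (powerPart m n).factorization q = m * (n.factorization q / m) :=
  factorization_prodPow n _ (by simp) q

lemma factorization_cap (K m q : ℕ) :
    (cap K m).factorization q = min (m.factorization q) K :=
  factorization_prodPow m _ (by simp) q

lemma factorization_cNum (K n q : ℕ) :
    (cNum K n).factorization q = if q ∈ QSet K n then 1 else 0 := by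
  have := factorization_prod_pow (QSet K n)
    (fun p hp => Nat.prime_of_mem_primeFactors (Finset.mem_filter.mp hp).1) (fun _ => 1) q
  simpa [cNum] using this

lemma cNum_ne_zero (K n : ℕ) : cNum K n ≠ 0 := by
  have : cNum K n = ∏ p ∈ QSet K n, p ^ 1 := by simp [cNum]
  rw [this]
  exact prod_pow_ne_zero _ (fun p hp => Nat.prime_of_mem_primeFactors (Finset.mem_filter.mp hp).1) _

lemma freePart_mul_powerPart (m : ℕ) {n : ℕ} (hn : n ≠ 0) :
    freePart m n * powerPart m n = n := by
  refine Nat.factorization_inj (Set.mem_setOf.mpr ?_) (Set.mem_setOf.mpr hn) ?_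
  · exact Nat.mul_ne_zero (freePart_ne_zero m n) (powerPart_ne_zero m n)
  · ext q
    rw [Nat.factorization_mul (freePart_ne_zero m n) (powerPart_ne_zero m n)]
    simp only [Finsupp.add_apply, factorization_freePart, factorization_powerPart]
    exact Nat.mod_add_div _ _

lemma kfree_iff {k n : ℕ} (hn : n ≠ 0) :
    KFree k n ↔ ∀ q : ℕ, n.factorization q < k := by
  constructor
  · intro h q
    by_cases hq : q.Prime
    · by_contra hle
      exact h q hq ((hq.pow_dvd_iff_le_factorization hn).mpr (not_lt.mp hle))
    · rw [Nat.factorization_eq_zero_of_not_prime n hq]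
      exact Nat.pos_of_ne_zero (by rintro rfl; exact (h 2 Nat.prime_two (by simpa using dvd_refl _)) )
  · intro h p hp hdvd
    exact absurd ((hp.pow_dvd_iff_le_factorization hn).mp hdvd) (not_le.mpr (h p))



-- membership in QSet
lemma mem_QSet {q : ℕ} (hK : K ≠ 0) : q ∈ QSet K n ↔ n.factorization q = K := by
  unfold QSet
  simp only [Finset.mem_filter, ← Nat.support_factorization, Finsupp.mem_support_iff]
  exact ⟨fun h => h.2, fun h => ⟨by rw [h]; exact hK, h⟩⟩

lemma powerPart_eq_cNum_pow (hK : K ≠ 0) (hn : n ≠ 0) (hfree : ∀ q, n.factorization q ≤ K) :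
    powerPart K n = cNum K n ^ K := by
  refine Nat.factorization_inj (Set.mem_setOf.mpr (powerPart_ne_zero K n))
    (Set.mem_setOf.mpr (pow_ne_zero _ (cNum_ne_zero K n))) ?_
  ext q
  rw [factorization_powerPart, Nat.factorization_pow, Finsupp.smul_apply, factorization_cNum,
    smul_eq_mul]
  rcases eq_or_lt_of_le (hfree q) with h | h
  · rw [if_pos ((mem_QSet hK).mpr h), h, Nat.div_self (Nat.pos_of_ne_zero hK)]
  · rw [Nat.div_eq_of_lt h, if_neg (fun hq => absurd ((mem_QSet hK).mp hq) h.ne)]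

lemma prime_of_mem_QSet {q : ℕ} (hq : q ∈ QSet K n) : q.Prime :=
  Nat.prime_of_mem_primeFactors (Finset.mem_filter.mp hq).1

-- totient of products of distinct primes to a power
lemma totient_prod_pow_mul (hK : K ≠ 0) (s : Finset ℕ) (hs : ∀ p ∈ s, p.Prime) :
    Nat.totient ((∏ p ∈ s, p) ^ K) * (∏ p ∈ s, p) = (∏ p ∈ s, p) ^ K * Nat.totient (∏ p ∈ s, p) := by
  induction s using Finset.induction with
  | empty => simp
  | @insert p s hp ih =>
    have hpp : p.Prime := hs p (Finset.mem_insert_self p s)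
    have hsp : ∀ q ∈ s, q.Prime := fun q hq => hs q (Finset.mem_insert_of_mem hq)
    have hcop : Nat.Coprime p (∏ q ∈ s, q) := by
      refine (Nat.Prime.coprime_iff_not_dvd hpp).mpr (fun hdvd => ?_)
      obtain ⟨q, hq, hdq⟩ := (Prime.dvd_finset_prod_iff hpp.prime _).mp hdvd
      exact hp (((Nat.prime_dvd_prime_iff_eq hpp (hsp q hq)).mp hdq) ▸ hq)
    rw [Finset.prod_insert hp, mul_pow, Nat.totient_mul (Nat.Coprime.pow _ _ hcop),
      Nat.totient_mul hcop, Nat.totient_prime_pow hpp (Nat.pos_of_ne_zero hK),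
      Nat.totient_prime hpp]
    calc p ^ (K - 1) * (p - 1) * ((∏ q ∈ s, q) ^ K).totient * (p * ∏ q ∈ s, q)
        = (p ^ (K - 1) * p) * (p - 1) * (((∏ q ∈ s, q) ^ K).totient * (∏ q ∈ s, q)) := by ring
      _ = p ^ K * (p - 1) * ((∏ q ∈ s, q) ^ K * (∏ q ∈ s, q).totient) := by
          rw [ih hsp, ← pow_succ, Nat.sub_add_cancel (Nat.one_le_iff_ne_zero.mpr hK)]
      _ = p ^ K * (∏ q ∈ s, q) ^ K * ((p - 1) * (∏ q ∈ s, q).totient) := by ring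

-- main nat identity
lemma key_nat_identity (hK : K ≠ 0) (hn : n ≠ 0) (hfree : ∀ q, n.factorization q ≤ K) :
    freePart K n * Nat.totient (powerPart K n) * cNum K n = n * Nat.totient (cNum K n) := by
  have hpp := powerPart_eq_cNum_pow hK hn hfree
  have ht : Nat.totient (cNum K n ^ K) * cNum K n = cNum K n ^ K * Nat.totient (cNum K n) :=
    totient_prod_pow_mul hK (QSet K n) (fun p hp => prime_of_mem_QSet hp)
  calc freePart K n * Nat.totient (powerPart K n) * cNum K n
      = freePart K n * (Nat.totient (cNum K n ^ K) * cNum K n) := by rw [hpp]; ring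
    _ = freePart K n * (cNum K n ^ K * Nat.totient (cNum K n)) := by rw [← ht]
    _ = (freePart K n * powerPart K n) * Nat.totient (cNum K n) := by rw [hpp]; ring
    _ = n * Nat.totient (cNum K n) := by rw [freePart_mul_powerPart _ hn]


lemma cap_dvd (K : ℕ) (hm : m ≠ 0) : cap K m ∣ m := by
  rw [← Nat.factorization_le_iff_dvd (cap_ne_zero K m) hm]
  intro q
  rw [factorization_cap]
  exact min_le_left _ _

lemma cap_kfree (K m : ℕ) : KFree (K + 1) (cap K m) := by
  rw [kfree_iff (cap_ne_zero K m)]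
  intro q
  rw [factorization_cap]
  exact lt_of_le_of_lt (min_le_right _ _) (Nat.lt_succ_self K)

lemma kfree_fact_le {n : ℕ} (hn : n ≠ 0) (h : KFree (K + 1) n) :
    ∀ q, n.factorization q ≤ K :=
  fun q => Nat.lt_succ_iff.mp ((kfree_iff hn).mp h q)

lemma cap_mul_eq (hK : K ≠ 0) (hn : n ≠ 0) (hf : ∀ q, n.factorization q ≤ K)
    (ht : t ∈ Nat.factoredNumbers (QSet K n)) : cap K (n * t) = n := by
  have ht0 : t ≠ 0 := (Nat.mem_factoredNumbers.mp ht).1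
  refine Nat.factorization_inj (Set.mem_setOf.mpr (cap_ne_zero _ _)) (Set.mem_setOf.mpr hn) ?_
  ext q
  rw [factorization_cap, Nat.factorization_mul hn ht0, Finsupp.add_apply]
  rcases Nat.eq_zero_or_pos (t.factorization q) with h0 | hpos
  · rw [h0, add_zero]
    exact min_eq_left (hf q)
  · have hq : q.Prime := Nat.prime_of_mem_primeFactors
      (by rw [← Nat.support_factorization]; exact Finsupp.mem_support_iff.mpr hpos.ne')
    have hdvd : q ∣ t := by
      rw [← pow_one q]
      exact (hq.pow_dvd_iff_le_factorization ht0).mpr hpos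
    have hQ : q ∈ QSet K n := Nat.mem_factoredNumbers'.mp ht q hq hdvd
    have hnq : n.factorization q = K := (mem_QSet hK).mp hQ
    rw [hnq]
    exact min_eq_right (Nat.le_add_right _ _)

lemma cap_decomp (hK : K ≠ 0) (hm : m ≠ 0) :
    m = cap K m * (m / cap K m) ∧ (m / cap K m) ∈ Nat.factoredNumbers (QSet K (cap K m)) := by
  have hdvd : cap K m ∣ m := cap_dvd K hm
  have heq : m = cap K m * (m / cap K m) := (Nat.mul_div_cancel' hdvd).symm
  refine ⟨heq, Nat.mem_factoredNumbers'.mpr fun q hq hqd => ?_⟩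
  have ht0 : m / cap K m ≠ 0 := by
    intro h; rw [h, mul_zero] at heq; exact hm heq
  have hfac : m.factorization q = (cap K m).factorization q + (m / cap K m).factorization q := by
    conv_lhs => rw [heq]
    rw [Nat.factorization_mul (cap_ne_zero K m) ht0, Finsupp.add_apply]
  have hqpos : 1 ≤ (m / cap K m).factorization q :=
    (hq.pow_dvd_iff_le_factorization ht0).mp (by rwa [pow_one])
  rw [mem_QSet hK, factorization_cap]
  rw [factorization_cap] at hfac
  -- min (e) K where e = m.factorization q; we know e = min e K + x with x ≥ 1, so e > K
  rcases le_or_gt (m.factorization q) K with h | h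
  · exfalso
    rw [min_eq_left h] at hfac
    omega
  · exact min_eq_right h.le


noncomputable def rad (t : ℕ) : ℕ := ∏ p ∈ t.primeFactors, p

noncomputable def g (t : ℕ) : ℝ := ((t * rad t : ℕ) : ℝ)⁻¹

lemma g_nonneg (t : ℕ) : 0 ≤ g t := inv_nonneg.mpr (Nat.cast_nonneg _)

lemma rad_pos (t : ℕ) : 0 < rad t :=
  Finset.prod_pos fun p hp => (Nat.prime_of_mem_primeFactors hp).pos

lemma rad_mul_coprime {a b : ℕ} (ha : a ≠ 0) (hb : b ≠ 0) (h : Nat.Coprime a b) :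
    rad (a * b) = rad a * rad b := by
  unfold rad
  rw [Nat.primeFactors_mul ha hb, Finset.prod_union h.disjoint_primeFactors]

lemma g_mul_coprime : ∀ {a b : ℕ}, Nat.Coprime a b → g (a * b) = g a * g b := by
  intro a b h
  rcases eq_or_ne a 0 with rfl | ha
  · have : b = 1 := by simpa using h
    subst this
    simp [g, rad]
  rcases eq_or_ne b 0 with rfl | hb
  · have : a = 1 := by simpa [Nat.coprime_zero_right] using h
    subst this
    simp [g, rad]
  · unfold g
    rw [rad_mul_coprime ha hb h]
    push_cast
    rw [mul_inv, mul_inv, mul_inv]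
    ring

lemma rad_prime_pow {p j : ℕ} (hp : p.Prime) (hj : j ≠ 0) : rad (p ^ j) = p := by
  unfold rad
  rw [Nat.primeFactors_prime_pow hj hp, Finset.prod_singleton]

lemma g_one : g 1 = 1 := by simp [g, rad]

lemma g_prime_pow {p : ℕ} (hp : p.Prime) (j : ℕ) :
    g (p ^ (j + 1)) = ((p : ℝ)⁻¹) ^ (j + 1) * (p : ℝ)⁻¹ := by
  unfold g
  rw [rad_prime_pow hp (Nat.succ_ne_zero j)]
  push_cast
  rw [mul_inv, inv_pow]

lemma inv_nat_lt_one {p : ℕ} (hp : 2 ≤ p) : (p : ℝ)⁻¹ < 1 := by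
  rw [inv_lt_one_iff₀]
  right
  exact_mod_cast lt_of_lt_of_le one_lt_two hp

lemma summable_g_prime_pow {p : ℕ} (hp : p.Prime) :
    Summable (fun j : ℕ => ‖g (p ^ j)‖) := by
  have hple : (0:ℝ) ≤ (p:ℝ)⁻¹ := by positivity
  refine Summable.of_nonneg_of_le (fun j => norm_nonneg _) (fun j => ?_)
    (summable_geometric_of_lt_one hple (inv_nat_lt_one hp.two_le))
  rcases j with _ | j
  · simp [g_one]
  · rw [Real.norm_eq_abs, abs_of_nonneg (g_nonneg _), g_prime_pow hp]
    calc ((p : ℝ)⁻¹) ^ (j + 1) * (p : ℝ)⁻¹ ≤ ((p : ℝ)⁻¹) ^ (j + 1) * 1 := by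
          refine mul_le_mul_of_nonneg_left ?_ (by positivity)
          exact (inv_nat_lt_one hp.two_le).le
      _ = ((p : ℝ)⁻¹) ^ (j + 1) := mul_one _

lemma tsum_g_prime_pow_le {p : ℕ} (hp : p.Prime) :
    ∑' j : ℕ, g (p ^ j) ≤ 1 + 2 * ((p:ℝ)⁻¹) ^ 2 := by
  have hple : (0:ℝ) ≤ (p:ℝ)⁻¹ := by positivity
  have hlt := inv_nat_lt_one hp.two_le
  have hs : Summable (fun j : ℕ => g (p ^ j)) := (summable_g_prime_pow hp).of_norm
  rw [Summable.tsum_eq_zero_add hs]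
  simp only [pow_zero, g_one]
  gcongr

  have hgeo : Summable (fun j : ℕ => ((p:ℝ)⁻¹) ^ (j + 1) * (p:ℝ)⁻¹) := by
    apply Summable.mul_right
    exact (summable_geometric_of_lt_one hple hlt).comp_injective (add_left_injective 1)
  calc ∑' j : ℕ, g (p ^ (j + 1)) = ∑' j : ℕ, ((p:ℝ)⁻¹) ^ (j + 1) * (p:ℝ)⁻¹ := by
        exact tsum_congr fun j => g_prime_pow hp j
    _ = (∑' j : ℕ, ((p:ℝ)⁻¹) ^ (j + 1)) * (p:ℝ)⁻¹ := tsum_mul_right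
    _ = ((1 - (p:ℝ)⁻¹)⁻¹ * (p:ℝ)⁻¹) * (p:ℝ)⁻¹ := by
        rw [show (fun j : ℕ => ((p:ℝ)⁻¹) ^ (j + 1)) = fun j : ℕ => ((p:ℝ)⁻¹) ^ j * (p:ℝ)⁻¹
          from funext fun j => pow_succ _ _, tsum_mul_right,
          tsum_geometric_of_lt_one hple hlt]
    _ ≤ 2 * ((p:ℝ)⁻¹) ^ 2 := by
        have h2 : (2:ℝ) ≤ (p:ℝ) := by exact_mod_cast hp.two_le
        have hhalf : (p:ℝ)⁻¹ ≤ 1/2 := by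
          rw [inv_le_comm₀ (by linarith) (by norm_num)]
          simpa using h2
        have hpos : (0:ℝ) < 1 - (p:ℝ)⁻¹ := by linarith
        have hinvle : (1 - (p:ℝ)⁻¹)⁻¹ ≤ 2 := by
          rw [inv_le_comm₀ hpos (by norm_num)]
          linarith
        calc (1 - (p:ℝ)⁻¹)⁻¹ * (p:ℝ)⁻¹ * (p:ℝ)⁻¹ ≤ 2 * (p:ℝ)⁻¹ * (p:ℝ)⁻¹ := by
              have := mul_le_mul_of_nonneg_right (mul_le_mul_of_nonneg_right hinvle hple) hple
              linarith [this]
          _ = 2 * ((p:ℝ)⁻¹) ^ 2 := by ring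



lemma euler_g (s : Finset ℕ) :
    Summable (fun m : Nat.factoredNumbers s => ‖g m‖) ∧
      HasSum (fun m : Nat.factoredNumbers s => g m)
        (∏ p ∈ s with p.Prime, ∑' j : ℕ, g (p ^ j)) :=
  EulerProduct.summable_and_hasSum_factoredNumbers_prod_filter_prime_tsum g_one
    (fun {a b} h => g_mul_coprime h) (fun {p} hp => summable_g_prime_pow hp) s

lemma telescope_bound (s : Finset ℕ) :
    ∑ p ∈ s with p.Prime, 2 * ((p:ℝ)⁻¹) ^ 2 ≤ 4 := by
  classical
  set s' := s.filter Nat.Prime with hs'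
  have hprime : ∀ p ∈ s', 2 ≤ p := fun p hp => ((Finset.mem_filter.mp hp).2).two_le
  have h1 : ∀ p ∈ s', 2 * ((p:ℝ)⁻¹) ^ 2 ≤ 4 * (((p:ℝ))⁻¹ - ((p:ℝ) + 1)⁻¹) := by
    intro p hp
    have h2 : (2:ℝ) ≤ (p:ℝ) := by exact_mod_cast hprime p hp
    have hp0 : (0:ℝ) < (p:ℝ) := by linarith
    have hp1 : (0:ℝ) < (p:ℝ) + 1 := by linarith
    have e1 : (p:ℝ)⁻¹ - ((p:ℝ)+1)⁻¹ = ((p:ℝ)*((p:ℝ)+1))⁻¹ := by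
      field_simp
      ring
    have e2 : ((p:ℝ)⁻¹)^2 = ((p:ℝ)*(p:ℝ))⁻¹ := by rw [sq, mul_inv]
    rw [e1, e2]
    have h4 : (2 * ((p:ℝ) * (p:ℝ)))⁻¹ ≤ ((p:ℝ) * ((p:ℝ) + 1))⁻¹ :=
      inv_anti₀ (by positivity) (by nlinarith)
    calc 2 * ((p:ℝ)*(p:ℝ))⁻¹ = 4 * (2 * ((p:ℝ)*(p:ℝ)))⁻¹ := by rw [mul_inv]; ring
      _ ≤ 4 * ((p:ℝ)*((p:ℝ)+1))⁻¹ := by linarith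
  refine le_trans (Finset.sum_le_sum h1) ?_
  rw [← Finset.mul_sum]
  have key : ∑ p ∈ s', (((p:ℝ))⁻¹ - ((p:ℝ) + 1)⁻¹) ≤ 1 := by
    set M := s.sup id + 1 with hM
    have himg : ∑ p ∈ s', (((p:ℝ))⁻¹ - ((p:ℝ) + 1)⁻¹)
        = ∑ j ∈ s'.image (fun p : ℕ => (p - 1 : ℕ)), (((j:ℝ) + 1)⁻¹ - ((j:ℝ) + 2)⁻¹) := by
      rw [Finset.sum_image]
      · refine Finset.sum_congr rfl fun p hp => ?_
        have h2 : 2 ≤ p := hprime p hp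
        have hc : ((p - 1 : ℕ) : ℝ) = (p:ℝ) - 1 := by
          have h1p : 1 ≤ p := by omega
          push_cast [h1p]
          ring
        rw [hc]
        ring_nf
      · intro p hp q hq h
        have := hprime p hp; have := hprime q hq
        simp only at h
        omega
    rw [himg]
    have hsub : s'.image (fun p : ℕ => (p - 1 : ℕ)) ⊆ Finset.range M := by
      intro j hj
      obtain ⟨p, hp, rfl⟩ := Finset.mem_image.mp hj
      have : p ≤ s.sup id := Finset.le_sup (f := id) (Finset.mem_filter.mp hp).1
      rw [Finset.mem_range]
      omega
    have hnn : ∀ j ∈ Finset.range M, j ∉ s'.image (fun p : ℕ => (p - 1 : ℕ)) →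
        (0:ℝ) ≤ ((j:ℝ) + 1)⁻¹ - ((j:ℝ) + 2)⁻¹ := by
      intro j _ _
      have : ((j:ℝ) + 2)⁻¹ ≤ ((j:ℝ) + 1)⁻¹ := inv_anti₀ (by positivity) (by linarith)
      linarith
    refine le_trans (Finset.sum_le_sum_of_subset_of_nonneg hsub hnn) ?_
    have := Finset.sum_range_sub' (f := fun j : ℕ => ((j:ℝ) + 1)⁻¹) M
    have heq : ∑ j ∈ Finset.range M, (((j:ℝ) + 1)⁻¹ - ((j:ℝ) + 2)⁻¹)
        = (((0:ℕ):ℝ) + 1)⁻¹ - ((M:ℝ) + 1)⁻¹ := by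
      rw [← this]
      refine Finset.sum_congr rfl fun j _ => ?_
      push_cast
      ring_nf
    rw [heq]
    have : (0:ℝ) ≤ ((M:ℝ) + 1)⁻¹ := by positivity
    norm_num
    linarith
  linarith

lemma tsum_factored_g_le (s : Finset ℕ) :
    ∑' m : Nat.factoredNumbers s, g m ≤ Real.exp 4 := by
  rw [(euler_g s).2.tsum_eq]
  calc ∏ p ∈ s with p.Prime, ∑' j : ℕ, g (p ^ j)
      ≤ ∏ p ∈ s with p.Prime, Real.exp (2 * ((p:ℝ)⁻¹) ^ 2) := by
        refine Finset.prod_le_prod (fun p _ => tsum_nonneg fun j => g_nonneg _) fun p hp => ?_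
        refine le_trans (tsum_g_prime_pow_le (Finset.mem_filter.mp hp).2) ?_
        have := Real.add_one_le_exp (2 * ((p:ℝ)⁻¹) ^ 2)
        linarith
    _ = Real.exp (∑ p ∈ s with p.Prime, 2 * ((p:ℝ)⁻¹) ^ 2) := (Real.exp_sum _ _).symm
    _ ≤ Real.exp 4 := Real.exp_le_exp.mpr (telescope_bound s)

lemma summable_g : Summable g := by
  refine summable_of_sum_le (c := Real.exp 4) (fun t => g_nonneg t) (fun u => ?_)
  classical
  set s : Finset ℕ := Finset.range (u.sup id + 1) with hs
  have hmem : ∀ t ∈ u.filter (· ≠ 0), t ∈ Nat.factoredNumbers s := by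
    intro t ht
    obtain ⟨htu, ht0⟩ := Finset.mem_filter.mp ht
    refine Nat.mem_factoredNumbers'.mpr fun p hp hdvd => ?_
    have hple : p ≤ t := Nat.le_of_dvd (Nat.pos_of_ne_zero ht0) hdvd
    have : t ≤ u.sup id := Finset.le_sup (f := id) htu
    rw [Finset.mem_range]
    omega
  have h0 : ∑ t ∈ u, g t = ∑ t ∈ u.filter (· ≠ 0), g t := by
    rw [Finset.sum_filter_of_ne]
    intro t _ hgt
    rintro rfl
    exact hgt (by simp [g])
  rw [h0]
  have h1 : ∑ t ∈ u.filter (· ≠ 0), g t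
      = ∑ x ∈ (u.filter (· ≠ 0)).subtype (· ∈ Nat.factoredNumbers s),
          g (x : ℕ) := by
    rw [Finset.sum_subtype_of_mem _ hmem]
  rw [h1]
  refine le_trans (Summable.sum_le_tsum _ (fun x _ => g_nonneg _) (euler_g s).1.of_norm) ?_
  exact tsum_factored_g_le s

lemma tail_tendsto : Tendsto (fun T : ℕ => ∑' t : ℕ, g (t + T)) atTop (nhds 0) :=
  tendsto_sum_nat_add g


lemma euler_inv (s : Finset ℕ) (hs : ∀ p ∈ s, p.Prime) :
    Summable (fun m : Nat.factoredNumbers s => ((m : ℕ) : ℝ)⁻¹) ∧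
      HasSum (fun m : Nat.factoredNumbers s => ((m : ℕ) : ℝ)⁻¹)
        (∏ p ∈ s, (1 - (p:ℝ)⁻¹)⁻¹) := by
  have h := EulerProduct.summable_and_hasSum_factoredNumbers_prod_filter_prime_tsum
    (f := fun n : ℕ => ((n : ℝ))⁻¹) (by norm_num)
    (fun {a b} _ => by push_cast; rw [mul_inv])
    (fun {p} hp => by
      have h2 : (2:ℝ) ≤ (p:ℝ) := by exact_mod_cast hp.two_le
      have hple : (0:ℝ) ≤ (p:ℝ)⁻¹ := by positivity
      have hlt : (p:ℝ)⁻¹ < 1 := by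
        rw [inv_lt_one_iff₀]; right; linarith
      refine Summable.congr (summable_geometric_of_lt_one hple hlt) fun n => ?_
      rw [Real.norm_eq_abs, abs_of_nonneg (by positivity)]
      push_cast
      rw [inv_pow]) s
  have hfilter : s.filter Nat.Prime = s := Finset.filter_true_of_mem hs
  rw [hfilter] at h
  have hval : ∀ p ∈ s, ∑' n : ℕ, (((p ^ n : ℕ) : ℝ))⁻¹ = (1 - (p:ℝ)⁻¹)⁻¹ := by
    intro p hp
    have h2 : (2:ℝ) ≤ (p:ℝ) := by exact_mod_cast (hs p hp).two_le
    have hple : (0:ℝ) ≤ (p:ℝ)⁻¹ := by positivity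
    have hlt : (p:ℝ)⁻¹ < 1 := by rw [inv_lt_one_iff₀]; right; linarith
    rw [← tsum_geometric_of_lt_one hple hlt]
    refine tsum_congr fun n => ?_
    push_cast
    rw [inv_pow]
  rw [Finset.prod_congr rfl hval] at h
  exact ⟨h.1.of_norm, h.2⟩

lemma prod_one_sub_inv_pos (s : Finset ℕ) (hs : ∀ p ∈ s, p.Prime) :
    0 < ∏ p ∈ s, (1 - (p:ℝ)⁻¹) := by
  refine Finset.prod_pos fun p hp => ?_
  have h2 : (2:ℝ) ≤ (p:ℝ) := by exact_mod_cast (hs p hp).two_le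
  have : (p:ℝ)⁻¹ < 1 := by rw [inv_lt_one_iff₀]; right; linarith
  linarith

/-- Euler product value equals `c / φ c` when `s` is the prime-factor set of `c`. -/
lemma prod_inv_eq_div_totient {c : ℕ} (hc : c ≠ 0) :
    ∏ p ∈ c.primeFactors, (1 - (p:ℝ)⁻¹)⁻¹ = (c : ℝ) / (Nat.totient c : ℝ) := by
  have hprimes : ∀ p ∈ c.primeFactors, p.Prime := fun p hp => Nat.prime_of_mem_primeFactors hp
  have hQ : (Nat.totient c : ℚ) = (c : ℚ) * ∏ p ∈ c.primeFactors, (1 - (p:ℚ)⁻¹) :=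
    Nat.totient_eq_mul_prod_factors c
  have hR : (Nat.totient c : ℝ) = (c : ℝ) * ∏ p ∈ c.primeFactors, (1 - (p:ℝ)⁻¹) := by
    have := congrArg (fun q : ℚ => (q : ℝ)) hQ
    push_cast at this
    exact this
  have hpos := prod_one_sub_inv_pos c.primeFactors hprimes
  rw [Finset.prod_inv_distrib, hR]
  rw [eq_div_iff (by positivity), inv_mul_eq_div, div_eq_iff hpos.ne']


noncomputable def V (K n : ℕ) : ℝ := ∏ p ∈ QSet K n, (1 - (p:ℝ)⁻¹)⁻¹

noncomputable def Fn (K n : ℕ) : ℕ → ℝ :=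
  Set.indicator (Nat.factoredNumbers (QSet K n)) (fun t => ((n * t : ℕ) : ℝ)⁻¹)

lemma Fn_nonneg (K n t : ℕ) : 0 ≤ Fn K n t := by
  unfold Fn
  rcases Set.indicator_eq_zero_or_self (Nat.factoredNumbers (QSet K n))
    (fun t => ((n * t : ℕ) : ℝ)⁻¹) t with h | h <;> rw [h]
  positivity

lemma hasSum_Fn (K n : ℕ) : HasSum (Fn K n) (((n:ℝ))⁻¹ * V K n) := by
  have hprimes : ∀ p ∈ QSet K n, p.Prime := fun p hp => prime_of_mem_QSet hp
  have h := ((euler_inv (QSet K n) hprimes).2).mul_left ((n:ℝ))⁻¹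
  have heq : (fun m : Nat.factoredNumbers (QSet K n) => ((n:ℝ))⁻¹ * ((m : ℕ) : ℝ)⁻¹)
      = (fun t : ℕ => ((n * t : ℕ) : ℝ)⁻¹) ∘ (Subtype.val) := by
    funext m
    simp only [Function.comp_apply]
    push_cast
    rw [mul_inv]
  rw [heq] at h
  exact hasSum_subtype_iff_indicator.mp h

lemma summable_Fn (K n : ℕ) : Summable (Fn K n) := (hasSum_Fn K n).summable

lemma tsum_Fn (K n : ℕ) : ∑' t, Fn K n t = ((n:ℝ))⁻¹ * V K n := (hasSum_Fn K n).tsum_eq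

lemma primeFactors_cNum (K n : ℕ) : (cNum K n).primeFactors = QSet K n := by
  ext q
  rw [← Nat.support_factorization, Finsupp.mem_support_iff, factorization_cNum]
  split_ifs with h <;> simp [h]

lemma V_eq_div (K n : ℕ) : V K n = (cNum K n : ℝ) / (Nat.totient (cNum K n) : ℝ) := by
  rw [V, ← primeFactors_cNum K n, prod_inv_eq_div_totient (cNum_ne_zero K n)]

lemma term_eq (hK : K ≠ 0) (hn : n ≠ 0) (hfree : ∀ q, n.factorization q ≤ K) :
    ((freePart K n * Nat.totient (powerPart K n) : ℕ) : ℝ)⁻¹ = ((n:ℝ))⁻¹ * V K n := by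
  have hkey := key_nat_identity hK hn hfree
  have hkeyR : ((freePart K n : ℝ) * (Nat.totient (powerPart K n) : ℝ)) * (cNum K n : ℝ)
      = (n : ℝ) * (Nat.totient (cNum K n) : ℝ) := by exact_mod_cast hkey
  have ha : (0:ℝ) < (freePart K n : ℝ) :=
    Nat.cast_pos.mpr (Nat.pos_of_ne_zero (freePart_ne_zero K n))
  have hb : (0:ℝ) < (Nat.totient (powerPart K n) : ℝ) :=
    Nat.cast_pos.mpr (Nat.totient_pos.mpr (Nat.pos_of_ne_zero (powerPart_ne_zero K n)))
  have hc : (0:ℝ) < (cNum K n : ℝ) :=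
    Nat.cast_pos.mpr (Nat.pos_of_ne_zero (cNum_ne_zero K n))
  have hfc : (0:ℝ) < (Nat.totient (cNum K n) : ℝ) :=
    Nat.cast_pos.mpr (Nat.totient_pos.mpr (Nat.pos_of_ne_zero (cNum_ne_zero K n)))
  have hn' : (0:ℝ) < (n : ℝ) := Nat.cast_pos.mpr (Nat.pos_of_ne_zero hn)
  rw [V_eq_div]
  push_cast
  have hone : ((freePart K n : ℝ) * ((powerPart K n).totient : ℝ))
      * (((n:ℝ))⁻¹ * ((cNum K n : ℝ) / ((cNum K n).totient : ℝ))) = 1 := by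
    field_simp
    linear_combination hkeyR
  exact inv_eq_of_mul_eq_one_left (by linear_combination hone)

noncomputable def H (N : ℕ) : ℝ := ∑ m ∈ Finset.Icc 1 N, ((m:ℝ))⁻¹

lemma H_nonneg (N : ℕ) : 0 ≤ H N :=
  Finset.sum_nonneg fun m _ => by positivity

lemma H_eq_harmonic (N : ℕ) : H N = (harmonic N : ℝ) := by
  unfold H harmonic
  push_cast
  have hIcc : Finset.Icc 1 N = Finset.Ico 1 (N+1) := by rw [Finset.Ico_add_one_right_eq_Icc]
  rw [hIcc, Finset.sum_Ico_eq_sum_range]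
  simp [add_comm]

lemma log_le_H (N : ℕ) : Real.log N ≤ H N := by
  rw [H_eq_harmonic]
  refine le_trans ?_ (log_add_one_le_harmonic N)
  rcases Nat.eq_zero_or_pos N with rfl | hN
  · simp
  · refine Real.log_le_log (by exact_mod_cast hN) (by push_cast; linarith)

lemma H_le (N : ℕ) : H N ≤ 1 + Real.log N := by
  rw [H_eq_harmonic]
  exact harmonic_le_one_add_log N

lemma tendsto_log_nat : Tendsto (fun N : ℕ => Real.log N) atTop atTop :=
  Real.tendsto_log_atTop.comp tendsto_natCast_atTop_atTop

lemma tendsto_inv_log : Tendsto (fun N : ℕ => (Real.log N)⁻¹) atTop (nhds 0) :=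
  tendsto_log_nat.inv_tendsto_atTop

lemma tendsto_H_div_log : Tendsto (fun N : ℕ => H N / Real.log N) atTop (nhds 1) := by
  have hlow : ∀ᶠ N : ℕ in atTop, (1:ℝ) ≤ H N / Real.log N := by
    filter_upwards [eventually_ge_atTop 2] with N hN
    have hlog : 0 < Real.log N := Real.log_pos (by exact_mod_cast hN)
    rw [le_div_iff₀ hlog, one_mul]
    exact log_le_H N
  have hup : ∀ᶠ N : ℕ in atTop, H N / Real.log N ≤ 1 + (Real.log N)⁻¹ := by
    filter_upwards [eventually_ge_atTop 2] with N hN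
    have hlog : 0 < Real.log N := Real.log_pos (by exact_mod_cast hN)
    rw [div_le_iff₀ hlog]
    have := H_le N
    field_simp
    linarith
  have h1 : Tendsto (fun _ : ℕ => (1:ℝ)) atTop (nhds 1) := tendsto_const_nhds
  have h2 : Tendsto (fun N : ℕ => 1 + (Real.log N)⁻¹) atTop (nhds 1) := by
    have := (tendsto_const_nhds : Tendsto (fun _ : ℕ => (1:ℝ)) atTop (nhds 1)).add tendsto_inv_log
    simpa using this
  exact tendsto_of_tendsto_of_tendsto_of_le_of_le' h1 h2 hlow hup

noncomputable def SS (K N : ℕ) : ℝ :=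
  ∑ n ∈ Finset.Icc 1 N, if KFree (K+1) n then ((n:ℝ))⁻¹ * V K n else 0

lemma term_nonneg (K n : ℕ) : 0 ≤ ((n:ℝ))⁻¹ * V K n := by
  rw [← tsum_Fn]
  exact tsum_nonneg fun t => Fn_nonneg K n t

lemma lower_bound (hK : K ≠ 0) (N : ℕ) : H N ≤ SS K N := by
  classical
  have hmaps : ∀ m ∈ Finset.Icc 1 N, cap K m ∈ Finset.Icc 1 N := by
    intro m hm
    rw [Finset.mem_Icc] at hm ⊢
    have hm0 : m ≠ 0 := by omega
    have h1 : 0 < cap K m := Nat.pos_of_ne_zero (cap_ne_zero K m)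
    have h2 : cap K m ≤ m := Nat.le_of_dvd (by omega) (cap_dvd K hm0)
    omega
  have hfib := Finset.sum_fiberwise_of_maps_to hmaps (fun m : ℕ => ((m:ℝ))⁻¹)
  unfold H
  rw [← hfib]
  unfold SS
  refine Finset.sum_le_sum fun n hn => ?_
  rcases Finset.eq_empty_or_nonempty
    ({m ∈ Finset.Icc 1 N | cap K m = n}) with he | ⟨m₀, hm₀⟩
  · rw [he, Finset.sum_empty]
    split_ifs
    · exact term_nonneg K n
    · exact le_refl _
  · have hm₀' := Finset.mem_filter.mp hm₀
    have hkf : KFree (K+1) n := hm₀'.2 ▸ cap_kfree K m₀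
    rw [if_pos hkf, ← tsum_Fn]
    have hdec : ∀ m ∈ {m ∈ Finset.Icc 1 N | cap K m = n},
        m = n * (m / n) ∧ (m / n) ∈ Nat.factoredNumbers (QSet K n) := by
      intro m hm
      obtain ⟨hmI, hcap⟩ := Finset.mem_filter.mp hm
      have hm0 : m ≠ 0 := by
        rw [Finset.mem_Icc] at hmI; omega
      have := cap_decomp (m := m) hK hm0
      rw [hcap] at this
      exact this
    have hinj : Set.InjOn (fun m => m / n)
        ({m ∈ Finset.Icc 1 N | cap K m = n} : Finset ℕ) := by
      intro m1 h1 m2 h2 h12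
      have e1 := (hdec m1 h1).1
      have e2 := (hdec m2 h2).1
      simp only at h12
      rw [e1, e2, h12]
    have himg : ∑ t ∈ ({m ∈ Finset.Icc 1 N | cap K m = n}).image (fun m => m / n),
        Fn K n t = ∑ m ∈ {m ∈ Finset.Icc 1 N | cap K m = n}, ((m:ℝ))⁻¹ := by
      rw [Finset.sum_image hinj]
      refine Finset.sum_congr rfl fun m hm => ?_
      obtain ⟨heq, hmem⟩ := hdec m hm
      unfold Fn
      rw [Set.indicator_of_mem hmem]
      conv_rhs => rw [heq]
    rw [← himg]
    exact Summable.sum_le_tsum _ (fun t _ => Fn_nonneg K n t) (summable_Fn K n)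

lemma rad_dvd_of_factored (hK : K ≠ 0) (hn : n ≠ 0) {s' : ℕ}
    (h : s' ∈ Nat.factoredNumbers (QSet K n)) : rad s' ∣ n := by
  unfold rad
  refine Finset.prod_primes_dvd _ (fun p hp => (Nat.prime_of_mem_primeFactors hp).prime)
    (fun p hp => ?_)
  have hpp := Nat.prime_of_mem_primeFactors hp
  have hpd : p ∣ s' := Nat.dvd_of_mem_primeFactors hp
  have hQ : p ∈ QSet K n := Nat.mem_factoredNumbers'.mp h p hpp hpd
  have : n.factorization p = K := (mem_QSet hK).mp hQ
  have h1 : 1 ≤ n.factorization p := by omega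
  rw [← pow_one p]
  exact (hpp.pow_dvd_iff_le_factorization hn).mpr h1

lemma rad_ge_two {s' : ℕ} (h : 2 ≤ s') : 2 ≤ rad s' := by
  obtain ⟨p, hp, hpd⟩ := Nat.exists_prime_and_dvd (by omega : s' ≠ 1)
  have hmem : p ∈ s'.primeFactors :=
    Nat.mem_primeFactors.mpr ⟨hp, hpd, by omega⟩
  calc 2 ≤ p := hp.two_le
    _ ≤ ∏ q ∈ s'.primeFactors, q :=
        Finset.single_le_prod' (fun q hq => (Nat.prime_of_mem_primeFactors hq).one_le) hmem

lemma sum_inv_multiples (N : ℕ) {r : ℕ} (hr : 1 ≤ r) :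
    ∑ n ∈ {n ∈ Finset.Icc 1 N | r ∣ n}, ((n:ℝ))⁻¹ ≤ ((r:ℝ))⁻¹ * H N := by
  classical
  have hterm : ∀ n ∈ {n ∈ Finset.Icc 1 N | r ∣ n},
      ((n:ℝ))⁻¹ = ((r:ℝ))⁻¹ * (((n / r : ℕ):ℝ))⁻¹ := by
    intro n hn
    obtain ⟨hnI, hdvd⟩ := Finset.mem_filter.mp hn
    have : n = r * (n / r) := (Nat.mul_div_cancel' hdvd).symm
    conv_lhs => rw [this]
    push_cast
    rw [mul_inv]
  rw [Finset.sum_congr rfl hterm, ← Finset.mul_sum]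
  refine mul_le_mul_of_nonneg_left ?_ (by positivity)
  have hinj : Set.InjOn (fun n => n / r) ({n ∈ Finset.Icc 1 N | r ∣ n} : Finset ℕ) := by
    intro n1 h1 n2 h2 h12
    obtain ⟨_, hd1⟩ := Finset.mem_filter.mp h1
    obtain ⟨_, hd2⟩ := Finset.mem_filter.mp h2
    simp only at h12
    rw [← Nat.mul_div_cancel' hd1, ← Nat.mul_div_cancel' hd2, h12]
  have himg := Finset.sum_image (s := {n ∈ Finset.Icc 1 N | r ∣ n}) (g := fun n => n / r)
      (f := fun w : ℕ => ((w:ℝ))⁻¹) hinj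
  rw [← himg]
  refine Finset.sum_le_sum_of_subset_of_nonneg ?_ (fun i _ _ => by positivity)
  intro w hw
  obtain ⟨n, hn, rfl⟩ := Finset.mem_image.mp hw
  obtain ⟨hnI, hdvd⟩ := Finset.mem_filter.mp hn
  rw [Finset.mem_Icc] at hnI ⊢
  constructor
  · exact Nat.one_le_div_iff (by omega) |>.mpr (Nat.le_of_dvd (by omega) hdvd)
  · exact le_trans (Nat.div_le_self n r) hnI.2

lemma per_t_bound (hK : K ≠ 0) (N : ℕ) {s' : ℕ} (hs' : 2 ≤ s') :
    ∑ n ∈ Finset.Icc 1 N, (if KFree (K+1) n then Fn K n s' else 0) ≤ H N * g s' := by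
  classical
  have hstep : ∑ n ∈ Finset.Icc 1 N, (if KFree (K+1) n then Fn K n s' else 0)
      ≤ ∑ n ∈ Finset.Icc 1 N, (if rad s' ∣ n then ((n:ℝ))⁻¹ * ((s':ℝ))⁻¹ else 0) := by
    refine Finset.sum_le_sum fun n hn => ?_
    have hn0 : n ≠ 0 := by rw [Finset.mem_Icc] at hn; omega
    by_cases hkf : KFree (K+1) n
    · rw [if_pos hkf]
      by_cases hmem : s' ∈ Nat.factoredNumbers (QSet K n)
      · have hdvd : rad s' ∣ n := rad_dvd_of_factored hK hn0 hmem
        rw [if_pos hdvd]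
        unfold Fn
        rw [Set.indicator_of_mem hmem]
        push_cast
        rw [mul_inv]
      · unfold Fn
        rw [Set.indicator_of_notMem hmem]
        split_ifs <;> positivity
    · rw [if_neg hkf]
      split_ifs <;> positivity
  refine le_trans hstep ?_
  rw [← Finset.sum_filter]
  have : ∑ n ∈ {n ∈ Finset.Icc 1 N | rad s' ∣ n}, ((n:ℝ))⁻¹ * ((s':ℝ))⁻¹
      = (∑ n ∈ {n ∈ Finset.Icc 1 N | rad s' ∣ n}, ((n:ℝ))⁻¹) * ((s':ℝ))⁻¹ := by
    rw [Finset.sum_mul]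
  rw [this]
  have hr : 1 ≤ rad s' := by have := rad_ge_two hs'; omega
  have hb := sum_inv_multiples N hr
  have hgs : g s' = ((s':ℝ))⁻¹ * ((rad s' : ℝ))⁻¹ := by
    unfold g
    push_cast
    rw [mul_inv]
  rw [hgs]
  calc (∑ n ∈ {n ∈ Finset.Icc 1 N | rad s' ∣ n}, ((n:ℝ))⁻¹) * ((s':ℝ))⁻¹
      ≤ (((rad s' : ℝ))⁻¹ * H N) * ((s':ℝ))⁻¹ := by
        refine mul_le_mul_of_nonneg_right hb (by positivity)
    _ = H N * (((s':ℝ))⁻¹ * ((rad s' : ℝ))⁻¹) := by ring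

lemma upper_bound (hK : K ≠ 0) (N T : ℕ) (hT : 1 ≤ T) :
    SS K N ≤ H (N * T) + H N * (∑' t : ℕ, g (t + (T + 1))) := by
  classical
  have hsplit : ∀ n : ℕ, ((n:ℝ))⁻¹ * V K n
      = ∑ t ∈ Finset.range (T+1), Fn K n t + ∑' t : ℕ, Fn K n (t + (T+1)) := by
    intro n
    rw [← tsum_Fn]
    exact (Summable.sum_add_tsum_nat_add (T+1) (summable_Fn K n)).symm
  have hSS : SS K N
      = (∑ n ∈ Finset.Icc 1 N, if KFree (K+1) n then ∑ t ∈ Finset.range (T+1), Fn K n t else 0)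
      + (∑ n ∈ Finset.Icc 1 N, if KFree (K+1) n then ∑' t : ℕ, Fn K n (t + (T+1)) else 0) := by
    unfold SS
    rw [← Finset.sum_add_distrib]
    refine Finset.sum_congr rfl fun n _ => ?_
    rw [hsplit n]
    split_ifs <;> simp
  rw [hSS]
  refine add_le_add ?_ ?_
  · -- A ≤ H (N*T)
    have hA : (∑ n ∈ Finset.Icc 1 N, if KFree (K+1) n then ∑ t ∈ Finset.range (T+1), Fn K n t else 0)
        = ∑ p ∈ (Finset.Icc 1 N ×ˢ Finset.range (T+1)).filter
            (fun p => KFree (K+1) p.1 ∧ p.2 ∈ Nat.factoredNumbers (QSet K p.1)),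
            (((p.1 * p.2 : ℕ):ℝ))⁻¹ := by
      rw [Finset.sum_filter, Finset.sum_product]
      refine Finset.sum_congr rfl fun n _ => ?_
      by_cases hkf : KFree (K+1) n
      · rw [if_pos hkf]
        refine Finset.sum_congr rfl fun t _ => ?_
        unfold Fn
        rw [Set.indicator_apply]
        by_cases hmem : t ∈ Nat.factoredNumbers (QSet K n)
        · rw [if_pos hmem, if_pos ⟨hkf, hmem⟩]
        · rw [if_neg hmem, if_neg (fun hc => hmem hc.2)]
      · rw [if_neg hkf]
        rw [eq_comm]
        refine Finset.sum_eq_zero fun t _ => ?_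
        rw [if_neg (fun hc => hkf hc.1)]
    rw [hA]
    have hinj : Set.InjOn (fun p : ℕ × ℕ => p.1 * p.2)
        ((Finset.Icc 1 N ×ˢ Finset.range (T+1)).filter
          (fun p => KFree (K+1) p.1 ∧ p.2 ∈ Nat.factoredNumbers (QSet K p.1)) : Finset (ℕ × ℕ)) := by
      intro p1 h1 p2 h2 h12
      simp only at h12
      have hh1 := Finset.mem_filter.mp h1
      have hh2 := Finset.mem_filter.mp h2
      have hmem1 := hh1.1; have hkf1 := hh1.2.1; have hf1 := hh1.2.2
      have hmem2 := hh2.1; have hkf2 := hh2.2.1; have hf2 := hh2.2.2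
      have hn1 : p1.1 ≠ 0 := by
        have := (Finset.mem_product.mp hmem1).1; rw [Finset.mem_Icc] at this; omega
      have hn2 : p2.1 ≠ 0 := by
        have := (Finset.mem_product.mp hmem2).1; rw [Finset.mem_Icc] at this; omega
      have hc1 : cap K (p1.1 * p1.2) = p1.1 :=
        cap_mul_eq hK hn1 (kfree_fact_le hn1 hkf1) hf1
      have hc2 : cap K (p2.1 * p2.2) = p2.1 :=
        cap_mul_eq hK hn2 (kfree_fact_le hn2 hkf2) hf2
      have hfst : p1.1 = p2.1 := by rw [← hc1, ← hc2, h12]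
      have hsnd : p1.2 = p2.2 := by
        have := h12
        rw [hfst] at this
        exact Nat.eq_of_mul_eq_mul_left (Nat.pos_of_ne_zero hn2) this
      exact Prod.ext hfst hsnd
    have himg := Finset.sum_image (g := fun p : ℕ × ℕ => p.1 * p.2)
        (f := fun m : ℕ => ((m:ℝ))⁻¹) hinj
    rw [← himg]
    unfold H
    refine Finset.sum_le_sum_of_subset_of_nonneg ?_ (fun i _ _ => by positivity)
    intro m hm
    obtain ⟨p, hp, rfl⟩ := Finset.mem_image.mp hm
    have hh := Finset.mem_filter.mp hp
    have hmem := hh.1; have hf := hh.2.2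
    obtain ⟨hIcc, hrange⟩ := Finset.mem_product.mp hmem
    rw [Finset.mem_Icc] at hIcc ⊢
    have ht0 : p.2 ≠ 0 := (Nat.mem_factoredNumbers.mp hf).1
    have htT : p.2 ≤ T := by rw [Finset.mem_range] at hrange; omega
    constructor
    · have : 1 ≤ p.1 := hIcc.1
      exact Nat.one_le_iff_ne_zero.mpr (Nat.mul_ne_zero (by omega) ht0)
    · exact Nat.mul_le_mul hIcc.2 htT
  · -- B ≤ H N * tail
    have hpull : ∀ n, (if KFree (K+1) n then ∑' t : ℕ, Fn K n (t + (T+1)) else 0)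
        = ∑' t : ℕ, (if KFree (K+1) n then Fn K n (t + (T+1)) else 0) := by
      intro n
      split_ifs
      · rfl
      · rw [tsum_zero]
    have hsummable : ∀ n ∈ Finset.Icc 1 N,
        Summable (fun t : ℕ => if KFree (K+1) n then Fn K n (t + (T+1)) else 0) := by
      intro n _
      by_cases hkf : KFree (K+1) n
      · simp only [if_pos hkf]
        exact (summable_nat_add_iff (T+1)).mpr (summable_Fn K n)
      · simp only [if_neg hkf]
        exact summable_zero
    rw [Finset.sum_congr rfl (fun n _ => hpull n), ← Summable.tsum_finsetSum hsummable]
    have hgsum : Summable (fun t : ℕ => g (t + (T+1))) :=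
      (summable_nat_add_iff (T+1)).mpr summable_g
    have hle : ∀ t : ℕ, ∑ n ∈ Finset.Icc 1 N, (if KFree (K+1) n then Fn K n (t + (T+1)) else 0)
        ≤ H N * g (t + (T+1)) := by
      intro t
      exact per_t_bound hK N (by omega)
    calc ∑' t : ℕ, ∑ n ∈ Finset.Icc 1 N, (if KFree (K+1) n then Fn K n (t + (T+1)) else 0)
        ≤ ∑' t : ℕ, H N * g (t + (T+1)) := by
          refine Summable.tsum_le_tsum hle (summable_sum hsummable) (hgsum.mul_left _)
      _ = H N * ∑' t : ℕ, g (t + (T+1)) := tsum_mul_left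

lemma SS_tendsto (hK : K ≠ 0) :
    Tendsto (fun N : ℕ => SS K N / Real.log N) atTop (nhds 1) := by
  rw [tendsto_order]
  constructor
  · -- lower
    intro a ha
    have hev := tendsto_H_div_log.eventually (eventually_gt_nhds ha)
    filter_upwards [hev, eventually_ge_atTop 2] with N hHN hN2
    have hlog : 0 < Real.log N := Real.log_pos (by exact_mod_cast hN2)
    have : H N / Real.log N ≤ SS K N / Real.log N := by
      gcongr
      exact lower_bound hK N
    linarith
  · -- upper
    intro a ha
    set ε : ℝ := (a - 1) / 2 with hε
    have hεpos : 0 < ε := by rw [hε]; linarith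
    obtain ⟨T₀, hT₀⟩ := (tail_tendsto.eventually_lt_const hεpos).exists_forall_of_atTop
    set T : ℕ := max T₀ 1 with hTdef
    have hT1 : 1 ≤ T := le_max_right _ _
    have htail : (∑' t : ℕ, g (t + (T + 1))) ≤ ε := by
      refine le_of_lt (hT₀ (T + 1) ?_)
      have : T₀ ≤ T := le_max_left _ _
      omega
    set C : ℝ := 1 + Real.log T + ε with hC
    have hφ : Tendsto (fun N : ℕ => 1 + ε + C * (Real.log N)⁻¹) atTop (nhds (1 + ε)) := by
      have h0 : Tendsto (fun N : ℕ => C * (Real.log N)⁻¹) atTop (nhds 0) := by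
        have := tendsto_inv_log.const_mul C
        simpa using this
      have := (tendsto_const_nhds : Tendsto (fun _ : ℕ => (1:ℝ) + ε) atTop (nhds (1 + ε))).add h0
      simpa using this
    have hlt : 1 + ε < a := by rw [hε]; linarith
    have hev2 := hφ.eventually (eventually_lt_nhds hlt)
    filter_upwards [hev2, eventually_ge_atTop 2] with N hφN hN2
    have hlog : 0 < Real.log N := Real.log_pos (by exact_mod_cast hN2)
    have hN0 : ((N:ℝ)) ≠ 0 := by positivity
    have hT0 : ((T:ℝ)) ≠ 0 := by
      have : (1:ℝ) ≤ (T:ℝ) := by exact_mod_cast hT1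
      linarith
    have hub := upper_bound hK N T hT1
    have hHNT : H (N * T) ≤ 1 + Real.log N + Real.log T := by
      refine le_trans (H_le (N * T)) ?_
      have : Real.log ((N * T : ℕ) : ℝ) = Real.log N + Real.log T := by
        push_cast
        exact Real.log_mul hN0 hT0
      rw [this]
      linarith
    have hHN : H N ≤ 1 + Real.log N := H_le N
    have hHN0 : 0 ≤ H N := H_nonneg N
    have htail0 : 0 ≤ (∑' t : ℕ, g (t + (T + 1))) := tsum_nonneg fun t => g_nonneg _
    have hSSle : SS K N ≤ 1 + Real.log N + Real.log T + (1 + Real.log N) * ε := by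
      have h1 : H N * (∑' t : ℕ, g (t + (T + 1))) ≤ (1 + Real.log N) * ε := by
        calc H N * (∑' t : ℕ, g (t + (T + 1))) ≤ H N * ε :=
              mul_le_mul_of_nonneg_left htail hHN0
          _ ≤ (1 + Real.log N) * ε := mul_le_mul_of_nonneg_right hHN hεpos.le
      linarith [hub, hHNT]
    rw [div_lt_iff₀ hlog]
    have hφmul : (1 + ε + C * (Real.log N)⁻¹) * Real.log N
        = (1 + ε) * Real.log N + C := by
      field_simp
    have hgoal : SS K N ≤ (1 + ε + C * (Real.log N)⁻¹) * Real.log N := by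
      rw [hφmul, hC]
      ring_nf
      ring_nf at hSSle
      linarith [hSSle]
    calc SS K N ≤ (1 + ε + C * (Real.log N)⁻¹) * Real.log N := hgoal
      _ < a * Real.log N := by
          exact mul_lt_mul_of_pos_right hφN hlog

end KfreeAux

open KfreeAux in
/-- For every `k ≥ 2`, the sum over `k`-free `n ≤ N` of
`1 / (n_{(k-1)-free} · φ(n_{(k-1)-power}))` is asymptotic to `log N` as `N → ∞`. -/
theorem kfree_totient_partial_sum_asymp
    (k : ℕ) (hk : 2 ≤ k) :
    Tendsto
      (fun N : ℕ =>
        (∑ n ∈ Finset.Icc 1 N,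
          if KFree k n then
            (1 : ℝ) / ((freePart (k - 1) n * Nat.totient (powerPart (k - 1) n) : ℕ) : ℝ)
          else 0) / Real.log N)
      atTop (nhds 1) := by
  set K : ℕ := k - 1 with hKdef
  have hK : K ≠ 0 := by omega
  have hkK : k = K + 1 := by omega
  have heq : (fun N : ℕ =>
        (∑ n ∈ Finset.Icc 1 N,
          if KFree k n then
            (1 : ℝ) / ((freePart (k - 1) n * Nat.totient (powerPart (k - 1) n) : ℕ) : ℝ)
          else 0) / Real.log N)
      = fun N : ℕ => SS K N / Real.log N := by
    funext N
    congr 1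
    unfold SS
    refine Finset.sum_congr rfl fun n hn => ?_
    have hn0 : n ≠ 0 := by rw [Finset.mem_Icc] at hn; omega
    rw [hkK]
    simp only [Nat.add_sub_cancel]
    by_cases hkf : KFree (K + 1) n
    · rw [if_pos hkf, if_pos hkf, one_div,
        term_eq hK hn0 (kfree_fact_le hn0 hkf)]
    · rw [if_neg hkf, if_neg hkf]
  rw [heq]
  exact SS_tendsto hK
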